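/- Let R be the free noncommutative F-algebra on two generators X₁, X₂ over F = ℚ(A), with the endomorphisms T₁, T₁⁻, T₂, T₂⁻ and the two-sided ideal J as above. Then each of T₁, T₁⁻, T₂, T₂⁻ maps J into J. Consequently, each of them descends to a well-defined F-algebra endomorphism of the quotient algebra B = R/J, i.e. there are F-algebra endomorphisms τ₁, τ₁⁻, τ₂, τ₂⁻ of B with τ_j ∘ π = π ∘ T_j (and similarly for the others), where π : R → B is the quotient map. -/
import Mathlib


/-- `F = ℚ(A)`, the field of rational functions in one variable over `ℚ`. -/
noncomputable abbrev F : Type := RatFunc ℚ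

/-- The variable `A ∈ ℚ(A)`. -/
noncomputable def A : F := RatFunc.X

/-- The deformed bracket `[x,y]_A = A·(x*y) − A⁻¹·(y*x)` in an `F`-algebra. -/
noncomputable def brA {S : Type*} [Ring S] [Algebra F S] (x y : S) : S :=
  A • (x * y) - A⁻¹ • (y * x)

/-- `R`, the free noncommutative `F`-algebra on two generators. -/
noncomputable abbrev R : Type := FreeAlgebra F (Fin 2)

/-- The first generator `X₁`. -/
noncomputable def X1 : R := FreeAlgebra.ι F 0

/-- The second generator `X₂`. -/
noncomputable def X2 : R := FreeAlgebra.ι F 1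

/-- The generators as a function on `Fin 2`. -/
noncomputable def X : Fin 2 → R := ![X1, X2]

/-- `T₁ : X₁ ↦ X₁, X₂ ↦ [X₁,X₂]_A`. -/
noncomputable def T1 : R →ₐ[F] R := FreeAlgebra.lift F ![X1, brA X1 X2]

/-- `T₁⁻ : X₁ ↦ X₁, X₂ ↦ [X₂,X₁]_A`. -/
noncomputable def T1inv : R →ₐ[F] R := FreeAlgebra.lift F ![X1, brA X2 X1]

/-- `T₂ : X₁ ↦ [X₂,X₁]_A, X₂ ↦ X₂`. -/
noncomputable def T2 : R →ₐ[F] R := FreeAlgebra.lift F ![brA X2 X1, X2]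

/-- `T₂⁻ : X₁ ↦ [X₁,X₂]_A, X₂ ↦ X₂`. -/
noncomputable def T2inv : R →ₐ[F] R := FreeAlgebra.lift F ![brA X1 X2, X2]

/-- The two-sided ideal `J` generated by `[[X₁,X₂]_A, X₁]_A − X₂` and
`[[X₂,X₁]_A, X₂]_A − X₁`. -/
noncomputable def J : TwoSidedIdeal R :=
  TwoSidedIdeal.span {brA (brA X1 X2) X1 - X2, brA (brA X2 X1) X2 - X1}

/-- The quotient algebra `B = R/J`. -/
noncomputable abbrev B : Type := RingQuot (fun x y : R => x - y ∈ J)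

/-- The quotient map `π : R → B` as an `F`-algebra homomorphism. -/
noncomputable def pi : R →ₐ[F] B := RingQuot.mkAlgHom F (fun x y : R => x - y ∈ J)


section Aux

/-- The rotation identity `[[x,y]_A, x]_A = [x, [y,x]_A]_A`. -/
lemma brA_rot {S : Type*} [Ring S] [Algebra F S] (x y : S) :
    brA (brA x y) x = brA x (brA y x) := by
  simp only [brA, smul_sub, sub_mul, mul_sub, smul_mul_assoc, mul_smul_comm, smul_smul,
    mul_assoc]
  rw [mul_comm A⁻¹ A]
  abel

lemma map_brA (f : R →ₐ[F] R) (x y : R) : f (brA x y) = brA (f x) (f y) := by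
  simp [brA, map_sub, map_smul, map_mul]

/-- The ring congruence associated to `J`. -/
noncomputable def c : RingCon R := J.ringCon

lemma c_iff {x y : R} : c x y ↔ x - y ∈ J := J.rel_iff x y

lemma c_smul (a : F) {x y : R} (h : c x y) : c (a • x) (a • y) := by
  rw [Algebra.smul_def, Algebra.smul_def]
  exact c.mul (c.refl _) h

lemma c_brA {x x' y y' : R} (hx : c x x') (hy : c y y') :
    c (brA x y) (brA x' y') :=
  c.sub (c_smul _ (c.mul hx hy)) (c_smul _ (c.mul hy hx))

lemma rel1 : c (brA (brA X1 X2) X1) X2 :=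
  c_iff.mpr (TwoSidedIdeal.subset_span (by left; rfl))

lemma rel2 : c (brA (brA X2 X1) X2) X1 :=
  c_iff.mpr (TwoSidedIdeal.subset_span (by right; rfl))

lemma rel1' : c (brA X1 (brA X2 X1)) X2 := (brA_rot X1 X2) ▸ rel1

lemma rel2' : c (brA X2 (brA X1 X2)) X1 := (brA_rot X2 X1) ▸ rel2

/-- Membership criterion: an algebra endomorphism sending the two generators of `J`
into `J` maps all of `J` into `J`. -/
lemma mapsJ (T : R →ₐ[F] R)
    (h1 : T (brA (brA X1 X2) X1 - X2) ∈ J)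
    (h2 : T (brA (brA X2 X1) X2 - X1) ∈ J) :
    ∀ x ∈ J, T x ∈ J := by
  intro x hx
  rw [← TwoSidedIdeal.mem_comap T]
  refine TwoSidedIdeal.mem_span_iff.mp hx (J.comap T) ?_
  rintro z (rfl | rfl) <;> rw [SetLike.mem_coe, TwoSidedIdeal.mem_comap] <;> assumption

lemma c_gen1 (T : R →ₐ[F] R) (h : c (T (brA (brA X1 X2) X1)) (T X2)) :
    T (brA (brA X1 X2) X1 - X2) ∈ J := by
  rw [map_sub]; exact c_iff.mp h

lemma c_gen2 (T : R →ₐ[F] R) (h : c (T (brA (brA X2 X1) X2)) (T X1)) :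
    T (brA (brA X2 X1) X2 - X1) ∈ J := by
  rw [map_sub]; exact c_iff.mp h

/-- Descent of an endomorphism preserving `J` to the quotient `B`. -/
lemma descend (T : R →ₐ[F] R) (hT : ∀ x ∈ J, T x ∈ J) :
    ∃ τ : B →ₐ[F] B, τ.comp pi = pi.comp T := by
  have w : ∀ ⦃x y : R⦄, (fun x y : R => x - y ∈ J) x y → (pi.comp T) x = (pi.comp T) y := by
    intro x y h
    simp only [AlgHom.comp_apply, pi]
    exact RingQuot.mkAlgHom_rel F (show T x - T y ∈ J by rw [← map_sub]; exact hT _ h)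
  refine ⟨RingQuot.liftAlgHom F ⟨pi.comp T, w⟩, ?_⟩
  refine AlgHom.ext fun x => ?_
  show (RingQuot.liftAlgHom F ⟨pi.comp T, w⟩) (RingQuot.mkAlgHom F _ x) = (pi.comp T) x
  exact RingQuot.liftAlgHom_mkAlgHom_apply F (pi.comp T) w x

end Aux

/-- Each of `T₁, T₁⁻, T₂, T₂⁻` maps `J` into `J`, and consequently each descends to a
well-defined `F`-algebra endomorphism of `B = R/J` commuting with the quotient map `π`. -/
theorem T_descend_to_quotient :
    (∀ x ∈ J, T1 x ∈ J) ∧ (∀ x ∈ J, T1inv x ∈ J) ∧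
    (∀ x ∈ J, T2 x ∈ J) ∧ (∀ x ∈ J, T2inv x ∈ J) ∧
    ∃ τ1 τ1inv τ2 τ2inv : B →ₐ[F] B,
      τ1.comp pi = pi.comp T1 ∧ τ1inv.comp pi = pi.comp T1inv ∧
      τ2.comp pi = pi.comp T2 ∧ τ2inv.comp pi = pi.comp T2inv := by
  have eT1 : T1 X1 = X1 ∧ T1 X2 = brA X1 X2 := by
    constructor <;> simp [T1, X1, X2, FreeAlgebra.lift_ι_apply]
  have eT1i : T1inv X1 = X1 ∧ T1inv X2 = brA X2 X1 := by
    constructor <;> simp [T1inv, X1, X2, FreeAlgebra.lift_ι_apply]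
  have eT2 : T2 X1 = brA X2 X1 ∧ T2 X2 = X2 := by
    constructor <;> simp [T2, X1, X2, FreeAlgebra.lift_ι_apply]
  have eT2i : T2inv X1 = brA X1 X2 ∧ T2inv X2 = X2 := by
    constructor <;> simp [T2inv, X1, X2, FreeAlgebra.lift_ι_apply]
  have hT1 : ∀ x ∈ J, T1 x ∈ J := by
    refine mapsJ T1 (c_gen1 T1 ?_) (c_gen2 T1 ?_)
    · simp only [map_brA, eT1.1, eT1.2]
      -- goal: c (brA (brA X1 (brA X1 X2)) X1) (brA X1 X2)
      rw [brA_rot]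
      exact (c_brA (c.refl X1) rel1).trans (c.refl (brA X1 X2))
    · simp only [map_brA, eT1.1, eT1.2]
      -- c (brA (brA (brA X1 X2) X1) (brA X1 X2)) X1
      exact (c_brA rel1 (c.refl _)).trans rel2'
  have hT1i : ∀ x ∈ J, T1inv x ∈ J := by
    refine mapsJ T1inv (c_gen1 T1inv ?_) (c_gen2 T1inv ?_)
    · simp only [map_brA, eT1i.1, eT1i.2]
      -- c (brA (brA X1 (brA X2 X1)) X1) (brA X2 X1)
      exact c_brA rel1' (c.refl X1)
    · simp only [map_brA, eT1i.1, eT1i.2]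
      -- c (brA (brA (brA X2 X1) X1) (brA X2 X1)) X1
      rw [brA_rot]
      exact (c_brA (c.refl _) rel1').trans rel2
  have hT2 : ∀ x ∈ J, T2 x ∈ J := by
    refine mapsJ T2 (c_gen1 T2 ?_) (c_gen2 T2 ?_)
    · simp only [map_brA, eT2.1, eT2.2]
      -- c (brA (brA (brA X2 X1) X2) (brA X2 X1)) X2
      exact (c_brA rel2 (c.refl _)).trans rel1'
    · simp only [map_brA, eT2.1, eT2.2]
      -- c (brA (brA X2 (brA X2 X1)) X2) (brA X2 X1)
      rw [brA_rot]
      exact (c_brA (c.refl X2) rel2).trans (c.refl _)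
  have hT2i : ∀ x ∈ J, T2inv x ∈ J := by
    refine mapsJ T2inv (c_gen1 T2inv ?_) (c_gen2 T2inv ?_)
    · simp only [map_brA, eT2i.1, eT2i.2]
      -- c (brA (brA (brA X1 X2) X2) (brA X1 X2)) X2
      rw [brA_rot]
      exact (c_brA (c.refl _) rel2').trans rel1
    · simp only [map_brA, eT2i.1, eT2i.2]
      -- c (brA (brA X2 (brA X1 X2)) X2) (brA X1 X2)
      exact c_brA rel2' (c.refl X2)
  obtain ⟨τ1, hτ1⟩ := descend T1 hT1
  obtain ⟨τ1i, hτ1i⟩ := descend T1inv hT1i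
  obtain ⟨τ2, hτ2⟩ := descend T2 hT2
  obtain ⟨τ2i, hτ2i⟩ := descend T2inv hT2i
  exact ⟨hT1, hT1i, hT2, hT2i, τ1, τ1i, τ2, τ2i, hτ1, hτ1i, hτ2, hτ2i⟩
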